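/- Let p₀, p₁, …, p_k be finitely many points in the Euclidean plane such that the sequence of first coordinates x(p₀), …, x(p_k) is monotone and the sequence of second coordinates y(p₀), …, y(p_k) is monotone. Then the total length of the polygonal path through these points satisfies Σ_{i=0}^{k−1} dist(p_i, p_{i+1}) ≤ √2 · dist(p₀, p_k). -/

import Mathlib

lemma tele_sum (k : ℕ) (f : Fin (k + 1) → ℝ) :
    ∑ i : Fin k, (f i.succ - f i.castSucc) = f (Fin.last k) - f 0 := by
  set g : ℕ → ℝ := fun n => f ⟨min n k, by omega⟩ with hg
  have h1 : ∑ i : Fin k, (f i.succ - f i.castSucc) = ∑ i ∈ Finset.range k, (g (i+1) - g i) := by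
    rw [← Fin.sum_univ_eq_sum_range]
    apply Finset.sum_congr rfl
    intro i _
    have hi := i.isLt
    have e1 : f i.succ = g (↑i + 1) := by
      exact congrArg f (Fin.ext (by simpa using (Nat.min_eq_left (by omega : (i:ℕ)+1 ≤ k)).symm))
    have e2 : f i.castSucc = g ↑i := by
      exact congrArg f (Fin.ext (by simpa using (Nat.min_eq_left (le_of_lt hi)).symm))
    rw [e1, e2]
  rw [h1, Finset.sum_range_sub]
  congr 1
  · exact congrArg f (Fin.ext (by simp))

lemma sum_abs_tele (k : ℕ) (f : Fin (k + 1) → ℝ) (h : Monotone f ∨ Antitone f) :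
    ∑ i : Fin k, |f i.succ - f i.castSucc| = |f 0 - f (Fin.last k)| := by
  rcases h with h | h
  · have h1 : ∀ i : Fin k, |f i.succ - f i.castSucc| = f i.succ - f i.castSucc := by
      intro i; exact abs_of_nonneg (sub_nonneg.2 (h (Fin.castSucc_le_succ i)))
    rw [Finset.sum_congr rfl fun i _ => h1 i, tele_sum, abs_sub_comm,
      abs_of_nonneg (sub_nonneg.2 (h (Fin.zero_le _)))]
  · have h1 : ∀ i : Fin k, |f i.succ - f i.castSucc| = f i.castSucc - f i.succ := by
      intro i; rw [abs_sub_comm]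
      exact abs_of_nonneg (sub_nonneg.2 (h (Fin.castSucc_le_succ i)))
    rw [Finset.sum_congr rfl fun i _ => h1 i]
    have := tele_sum k (fun i => -f i)
    simp only [sub_neg_eq_add, neg_add_eq_sub] at this
    rw [show (∑ i : Fin k, (f i.castSucc - f i.succ)) = ∑ i : Fin k, (-f i.succ - -f i.castSucc)
      from by apply Finset.sum_congr rfl; intro i _; ring]
    rw [tele_sum k (fun i => -f i)]
    rw [abs_of_nonneg (sub_nonneg.2 (h (Fin.zero_le _)))]
    ring

lemma dist_eq_two (a b : EuclideanSpace ℝ (Fin 2)) :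
    dist a b = Real.sqrt ((a 0 - b 0) ^ 2 + (a 1 - b 1) ^ 2) := by
  rw [EuclideanSpace.dist_eq, Fin.sum_univ_two]
  norm_num [Real.dist_eq, sq_abs]

lemma dist_le_l1 (a b : EuclideanSpace ℝ (Fin 2)) :
    dist a b ≤ |a 0 - b 0| + |a 1 - b 1| := by
  rw [dist_eq_two]
  rw [show |a 0 - b 0| + |a 1 - b 1| = Real.sqrt ((|a 0 - b 0| + |a 1 - b 1|) ^ 2) from
    (Real.sqrt_sq (by positivity)).symm]
  apply Real.sqrt_le_sqrt
  nlinarith [abs_nonneg (a 0 - b 0), abs_nonneg (a 1 - b 1), sq_abs (a 0 - b 0),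
    sq_abs (a 1 - b 1), mul_nonneg (abs_nonneg (a 0 - b 0)) (abs_nonneg (a 1 - b 1))]

lemma l1_le_sqrt2_dist (a b : EuclideanSpace ℝ (Fin 2)) :
    |a 0 - b 0| + |a 1 - b 1| ≤ Real.sqrt 2 * dist a b := by
  rw [dist_eq_two, ← Real.sqrt_mul (by norm_num)]
  rw [show |a 0 - b 0| + |a 1 - b 1| = Real.sqrt ((|a 0 - b 0| + |a 1 - b 1|) ^ 2) from
    (Real.sqrt_sq (by positivity)).symm]
  apply Real.sqrt_le_sqrt
  nlinarith [sq_abs (a 0 - b 0), sq_abs (a 1 - b 1), sq_nonneg (|a 0 - b 0| - |a 1 - b 1|)]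

/-- An `x`- and `y`-monotone polygonal path has total length at most `√2` times the
Euclidean distance between its endpoints. -/
theorem monotone_path_length_le_sqrt_two_mul_dist
    (k : ℕ) (p : Fin (k + 1) → EuclideanSpace ℝ (Fin 2))
    (hx : Monotone (fun i => p i 0) ∨ Antitone (fun i => p i 0))
    (hy : Monotone (fun i => p i 1) ∨ Antitone (fun i => p i 1)) :
    ∑ i : Fin k, dist (p i.castSucc) (p i.succ) ≤
      Real.sqrt 2 * dist (p 0) (p (Fin.last k)) := by
  calc ∑ i : Fin k, dist (p i.castSucc) (p i.succ)
      ≤ ∑ i : Fin k, (|p i.succ 0 - p i.castSucc 0| + |p i.succ 1 - p i.castSucc 1|) := by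
        apply Finset.sum_le_sum; intro i _
        rw [dist_comm]; exact dist_le_l1 _ _
    _ = |p 0 0 - p (Fin.last k) 0| + |p 0 1 - p (Fin.last k) 1| := by
        rw [Finset.sum_add_distrib, sum_abs_tele k _ hx, sum_abs_tele k _ hy]
    _ ≤ Real.sqrt 2 * dist (p 0) (p (Fin.last k)) := l1_le_sqrt2_dist _ _
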